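/- Consider the real-time utility U(z) = C(z, ω) + p_s·C_k - p_e·max(C_k - z, 0) where C(z, ω) = ω(s - z) - (α/2)(s - z)² for s - z ≤ ω/α and C(z,ω) = ω²/(2α) otherwise, with 0 < p_e < ω and α > 0. Let z₁ = s - ω/α and z₂ = s - (ω - p_e)/α. Then the maximizer z* of U over [0, s] (assuming 0 ≤ z₁ and z₂ ≤ s) satisfies: z* = z₁ if C_k < z₁; z* = z₂ if C_k > z₂; and z* = C_k if z₁ ≤ C_k ≤ z₂. -/

import Mathlib

set_option maxHeartbeats 1000000


/-- Real-time decision (Observation 1): with utility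
`U(z) = C(z,ω) + p_s C_k - p_e max(C_k - z, 0)`, where `C` is the convenience function of
the residual consumption `s - z`, the maximizer of `U` over `[0, s]` is `z₁ = s - ω/α`
if `C_k < z₁`, `z₂ = s - (ω - p_e)/α` if `C_k > z₂`, and `C_k` otherwise. -/
theorem realtime_optimal_sellback (α ω pe ps s Ck : ℝ)
    (hα : 0 < α) (hpe : 0 < pe) (hpeω : pe < ω) (hs : ω / α ≤ s) (hCk : 0 ≤ Ck)
    (Cv U : ℝ → ℝ)
    (hCv : ∀ z : ℝ, Cv z =
      if s - z ≤ ω / α then ω * (s - z) - α * (s - z) ^ 2 / 2 else ω ^ 2 / (2 * α))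
    (hU : ∀ z : ℝ, U z = Cv z + ps * Ck - pe * max (Ck - z) 0)
    (z1 z2 : ℝ) (hz1 : z1 = s - ω / α) (hz2 : z2 = s - (ω - pe) / α) (hz2s : z2 ≤ s) :
    (Ck < z1 → ∀ z ∈ Set.Icc (0 : ℝ) s, U z ≤ U z1) ∧
    (z2 < Ck → ∀ z ∈ Set.Icc (0 : ℝ) s, U z ≤ U z2) ∧
    (z1 ≤ Ck → Ck ≤ z2 → ∀ z ∈ Set.Icc (0 : ℝ) s, U z ≤ U Ck) := by
  have hα' : α ≠ 0 := ne_of_gt hα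
  obtain ⟨q, hq0, hq⟩ : ∃ q : ℝ, 0 < q ∧ α * q = pe :=
    ⟨pe / α, div_pos hpe hα, by field_simp⟩
  have hz21 : z2 - z1 = q := by
    have h : α * (z2 - z1) = α * q := by rw [hq, hz1, hz2]; field_simp; ring
    exact mul_left_cancel₀ hα' h
  have hUform : ∀ z : ℝ, U z =
      ω ^ 2 / (2 * α) + ps * Ck - α * (max (z - z1) 0) ^ 2 / 2 - pe * max (Ck - z) 0 := by
    intro z
    rw [hU, hCv]
    split_ifs with h
    · have h1 : (0 : ℝ) ≤ z - z1 := by rw [hz1]; linarith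
      rw [max_eq_left h1, hz1]
      field_simp
      ring
    · have h1 : z - z1 ≤ 0 := by push_neg at h; rw [hz1]; linarith
      rw [max_eq_right h1]
      ring
  refine ⟨?_, ?_, ?_⟩
  · intro hc z hz
    rw [hUform z, hUform z1]
    have h1 : max (z1 - z1) 0 = 0 := by simp
    have h2 : max (Ck - z1) 0 = 0 := max_eq_right (by linarith)
    rw [h1, h2]
    nlinarith [mul_nonneg hα.le (sq_nonneg (max (z - z1) 0)),
      mul_nonneg hpe.le (le_max_right (Ck - z) 0)]
  · intro hc z hz
    rw [hUform z, hUform z2]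
    have h1 : max (z2 - z1) 0 = q := by rw [hz21, max_eq_left hq0.le]
    have h2 : max (Ck - z2) 0 = Ck - z2 := max_eq_left (by linarith)
    rw [h1, h2]
    rcases le_or_gt (Ck - z) 0 with hzc | hzc
    · rw [max_eq_right hzc]
      have hzz1 : 0 ≤ z - z1 := by nlinarith
      rw [max_eq_left hzz1]
      have key : 0 ≤ α * ((z - z1) - ((Ck - z2) + q)) * ((z - z1) + ((Ck - z2) + q)) := by
        apply mul_nonneg (mul_nonneg hα.le (by linarith)) (by nlinarith)
      nlinarith [key, mul_nonneg hα.le (sq_nonneg (Ck - z2)), hq]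
    · rw [max_eq_left (le_of_lt hzc)]
      rcases le_or_gt (z - z1) 0 with hzz | hzz
      · rw [max_eq_right hzz]
        nlinarith [mul_nonneg hpe.le (show (0:ℝ) ≤ z1 - z by linarith), hq,
          mul_nonneg hα.le (sq_nonneg q)]
      · rw [max_eq_left (le_of_lt hzz)]
        nlinarith [mul_nonneg hα.le (sq_nonneg (z - z1 - q)), hq]
  · intro hc1 hc2 z hz
    rw [hUform z, hUform Ck]
    have h1 : max (Ck - z1) 0 = Ck - z1 := max_eq_left (by linarith)
    have h2 : max (Ck - Ck) 0 = 0 := by simp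
    rw [h1, h2]
    have hbnd : Ck - z1 ≤ q := by linarith [hz21]
    have hαb : α * (Ck - z1) ≤ pe := by
      calc α * (Ck - z1) ≤ α * q := by apply mul_le_mul_of_nonneg_left hbnd hα.le
        _ = pe := hq
    rcases le_or_gt (Ck - z) 0 with hzc | hzc
    · rw [max_eq_right hzc]
      have hzz1 : 0 ≤ z - z1 := by linarith
      rw [max_eq_left hzz1]
      nlinarith [mul_nonneg (mul_nonneg hα.le (show (0:ℝ) ≤ z - Ck by linarith))
        (show (0:ℝ) ≤ z + Ck - 2 * z1 by linarith)]
    · rw [max_eq_left (le_of_lt hzc)]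
      rcases le_or_gt (z - z1) 0 with hzz | hzz
      · rw [max_eq_right hzz]
        have key : α * (Ck - z1) ^ 2 / 2 ≤ pe * (Ck - z) := by
          nlinarith [mul_nonneg (show (0:ℝ) ≤ pe - α * (Ck - z1) by linarith)
            (show (0:ℝ) ≤ Ck - z1 by linarith),
            mul_nonneg hpe.le (show (0:ℝ) ≤ z1 - z by linarith),
            mul_nonneg hα.le (sq_nonneg (Ck - z1))]
        linarith
      · rw [max_eq_left (le_of_lt hzz)]
        have key : α * (Ck - z1) ^ 2 / 2 ≤ α * (z - z1) ^ 2 / 2 + pe * (Ck - z) := by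
          nlinarith [mul_nonneg (show (0:ℝ) ≤ pe - α * (Ck - z1) by linarith) hzc.le,
            mul_nonneg hα.le (sq_nonneg (Ck - z))]
        linarith
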